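/- arXiv:1707.03335 — 4 statements merged into one kernel-verified Lean document; each statement's English description precedes it below -/
import Mathlib

section
/- A financial market (𝓗,τ,≤,𝓘,𝓡) is strongly free of arbitrage if and only if the super-replication functional satisfies 𝓓(R) > 0 for every R ∈ 𝓡. -/
open Filter Topology MeasureTheory

section Defs

variable {H : Type*} [AddCommGroup H] [Module ℝ H] [TopologicalSpace H]

/-- An agent: a complete, transitive binary relation that is weakly monotone with respect to
the common order `le`, convex (upper contour sets are convex), and sequentially
τ-lower semicontinuous. -/
def IsAgent (le : H → H → Prop) (pre : H → H → Prop) : Prop :=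
  (∀ X Y, pre X Y ∨ pre Y X) ∧
  (∀ X Y Z, pre X Y → pre Y Z → pre X Z) ∧
  (∀ X Y, le X Y → pre X Y) ∧
  (∀ X, Convex ℝ {Z | pre X Z}) ∧
  (∀ (Xn : ℕ → H) (X Y : H),
    Tendsto Xn atTop (𝓝 X) → (∀ n, pre (Xn n) Y) → pre X Y)

/-- Viability of a financial market with common order `le`, net trades `I` and
relevant claims `R`. -/
def Viable (le : H → H → Prop) (I R : Set H) : Prop :=
  ∃ 𝒜 : Set (H → H → Prop),
    (∀ pre ∈ 𝒜, IsAgent le pre) ∧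
    (∀ pre ∈ 𝒜, ∀ l ∈ I, pre l 0) ∧
    (∀ r ∈ R, ∃ pre ∈ 𝒜, pre 0 r ∧ ¬ pre r 0)

/-- A free lunch with vanishing risk. -/
def FreeLunch (le : H → H → Prop) (I R : Set H) : Prop :=
  ∃ (l e : ℕ → H) (r : H),
    (∀ n, l n ∈ I) ∧ r ∈ R ∧ (∀ n, le 0 (e n)) ∧
    Tendsto e atTop (𝓝 0) ∧ ∀ n, le r (e n + l n)

/-- Strong absence of arbitrage: no free lunch with vanishing risk exists. -/
def StronglyFreeOfArbitrage (le : H → H → Prop) (I R : Set H) : Prop :=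
  ¬ FreeLunch le I R

/-- The super-replication functional `𝓓`, with values in `ℝ ∪ {±∞}` (and `inf ∅ = +∞`).
Here `const c` denotes the constant claim `c`. -/
noncomputable def superRep (le : H → H → Prop) (I : Set H) (const : ℝ → H) (X : H) : EReal :=
  sInf ((fun c : ℝ => (c : EReal)) ''
    {c : ℝ | ∃ l e : ℕ → H, (∀ n, l n ∈ I) ∧ (∀ n, le 0 (e n)) ∧
      Tendsto e atTop (𝓝 0) ∧ ∀ n, le X (const c + e n + l n)})

/-- A sublinear expectation: an `ℝ ∪ {+∞}`-valued functional that is monotone with respect to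
the common order, translation-invariant by constants, subadditive and positively homogeneous. -/
def IsSublinearExpectation (le : H → H → Prop) (const : ℝ → H) (E : H → EReal) : Prop :=
  (∀ X, E X ≠ ⊥) ∧
  (∀ X Y, le X Y → E X ≤ E Y) ∧
  (∀ (X : H) (c : ℝ), E (X + const c) = E X + (c : EReal)) ∧
  (∀ X Y, E (X + Y) ≤ E X + E Y) ∧
  (∀ (X : H) (l : ℝ), 0 < l → E (l • X) = (l : EReal) * E X)

/-- Full support: `𝓔(R) > 0` for every relevant claim `R`. -/
def HasFullSupport (R : Set H) (E : H → EReal) : Prop := ∀ r ∈ R, 0 < E r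

/-- The martingale property: `𝓔(ℓ) ≤ 0` for every net trade `ℓ`. -/
def HasMartingaleProperty (I : Set H) (E : H → EReal) : Prop := ∀ l ∈ I, E l ≤ 0

/-- Sequential τ-lower semicontinuity of an `EReal`-valued functional. -/
def SeqLSC (E : H → EReal) : Prop :=
  ∀ (Xn : ℕ → H) (X : H), Tendsto Xn atTop (𝓝 X) →
    E X ≤ Filter.liminf (fun n => E (Xn n)) atTop

/-- A martingale functional: a τ-continuous linear functional that is positive,
normalized (`φ(1) = 1`, where `one` is the constant claim `1`) and nonpositive on net trades. -/
def IsMartingaleFunctional (le : H → H → Prop) (I : Set H) (one : H) (φ : H →L[ℝ] ℝ) : Prop :=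
  (∀ X, le 0 X → 0 ≤ φ X) ∧ φ one = 1 ∧ ∀ l ∈ I, φ l ≤ 0

/-- The set `𝓠_ac` of absolutely continuous martingale functionals: martingale functionals
vanishing on every negligible claim. -/
def Qac (le : H → H → Prop) (I : Set H) (one : H) : Set (H →L[ℝ] ℝ) :=
  {φ | IsMartingaleFunctional le I one φ ∧ ∀ Z, le 0 Z → le Z 0 → φ Z = 0}

end Defs

theorem strongly_free_of_arbitrage_iff_superRep_positive_on_relevant
    {Ω : Type*} [MeasurableSpace Ω]
    -- the commodity space 𝓗: a vector space of measurable functions containing constants,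
    -- with a metrizable vector space topology τ
    (H : Submodule ℝ (Ω → ℝ)) [TopologicalSpace H]
    [TopologicalSpace.MetrizableSpace H] [IsTopologicalAddGroup H] [ContinuousSMul ℝ H]
    (hmeas : ∀ X : H, Measurable (X : Ω → ℝ))
    (hconst : ∀ c : ℝ, (fun _ : Ω => c) ∈ H)
    -- the common order ≤ : a preorder compatible with the vector operations,
    -- agreeing with the order of ℝ on constants and extending the pointwise order
    (le : H → H → Prop)
    (hrefl : ∀ X, le X X)
    (htrans : ∀ X Y Z, le X Y → le Y Z → le X Z)
    (hadd : ∀ X Y W : H, le X Y → le (X + W) (Y + W))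
    (hsmul : ∀ (X Y : H) (c : ℝ), 0 ≤ c → le X Y → le (c • X) (c • Y))
    (hconst_iff : ∀ c d : ℝ,
      le ⟨fun _ => c, hconst c⟩ ⟨fun _ => d, hconst d⟩ ↔ c ≤ d)
    (hpointwise : ∀ X Y : H, (∀ ω, (X : Ω → ℝ) ω ≤ (Y : Ω → ℝ) ω) → le X Y)
    -- the net trades 𝓘: a convex cone containing 0
    (I : Set H)
    (hI0 : (0 : H) ∈ I)
    (hIcone : ∀ x ∈ I, ∀ y ∈ I, ∀ a b : ℝ, 0 ≤ a → 0 ≤ b → a • x + b • y ∈ I)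
    -- the relevant claims 𝓡: a convex subset of the positive claims 𝓟⁺
    (R : Set H)
    (hRpos : R ⊆ {X | le 0 X ∧ ¬ le X 0})
    (hRconv : Convex ℝ R)
    :
    StronglyFreeOfArbitrage le I R ↔
      ∀ r ∈ R, 0 < superRep le I (fun c => ⟨fun _ => c, hconst c⟩) r := by
  classical
  set const : ℝ → H := fun c => (⟨fun _ => c, hconst c⟩ : H) with hconstdef
  have const_zero : const 0 = 0 := rfl
  have const_smul : ∀ c : ℝ, const c = c • const 1 :=
    fun c => Subtype.ext (funext fun ω => (mul_one c).symm)
  have le_const_mono : ∀ c d : ℝ, c ≤ d → le (const c) (const d) :=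
    fun c d h => (hconst_iff c d).mpr h
  have le_zero_const : ∀ c : ℝ, 0 ≤ c → le 0 (const c) := by
    intro c hc
    have := le_const_mono 0 c hc
    rwa [const_zero] at this
  have le_add_of_both : ∀ a b : H, le 0 a → le 0 b → le 0 (a + b) := by
    intro a b ha hb
    have h1 := hadd 0 b a hb
    rw [zero_add, add_comm b a] at h1
    exact htrans _ _ _ ha h1
  constructor
  · -- no free lunch → superRep positive on R
    intro hNA r hr
    by_contra hneg
    rw [not_lt] at hneg
    have key : ∀ k : ℕ, ∃ c : ℝ, c < 1 / (k + 1 : ℝ) ∧ ∃ l e : ℕ → H,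
        (∀ n, l n ∈ I) ∧ (∀ n, le 0 (e n)) ∧ Tendsto e atTop (𝓝 0) ∧
        ∀ n, le r (const c + e n + l n) := by
      intro k
      have hpos' : (0 : EReal) < ((1 / (k + 1 : ℝ) : ℝ) : EReal) := by
        exact_mod_cast (by positivity : (0 : ℝ) < 1 / (k + 1 : ℝ))
      have hlt : superRep le I const r < ((1 / (k + 1 : ℝ) : ℝ) : EReal) :=
        lt_of_le_of_lt hneg hpos'
      rw [superRep] at hlt
      obtain ⟨x, hx, hxlt⟩ := sInf_lt_iff.mp hlt
      obtain ⟨c, hcmem, rfl⟩ := hx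
      obtain ⟨l, e, hl, he, het, hler⟩ := hcmem
      exact ⟨c, by exact_mod_cast (show (c : EReal) < ((1 / (k + 1 : ℝ) : ℝ) : EReal) from hxlt), l, e, hl, he, het, hler⟩
    choose c hclt L E hL hE hEt hler using key
    letI : MetricSpace H := TopologicalSpace.metrizableSpaceMetric H
    have hn : ∀ k : ℕ, ∃ N : ℕ, ∀ n ≥ N, dist (E k n) 0 < 1 / (k + 1 : ℝ) := by
      intro k
      exact Metric.tendsto_atTop.mp (hEt k) _ (by positivity)
    choose N hN using hn
    set e0 : ℕ → H := fun k => E k (N k) with he0def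
    set l' : ℕ → H := fun k => L k (N k) with hl'def
    set e' : ℕ → H := fun k => const (1 / (k + 1 : ℝ)) + e0 k with he'def
    have h1 : Tendsto (fun k : ℕ => (1 / (k + 1 : ℝ))) atTop (𝓝 0) :=
      tendsto_one_div_add_atTop_nhds_zero_nat
    have hd : ∀ k, dist (e0 k) 0 < 1 / (k + 1 : ℝ) := fun k => hN k (N k) le_rfl
    have he0t : Tendsto e0 atTop (𝓝 0) := by
      rw [tendsto_iff_dist_tendsto_zero]
      exact squeeze_zero (fun k => dist_nonneg) (fun k => (hd k).le) h1
    have hct : Tendsto (fun k : ℕ => const (1 / (k + 1 : ℝ))) atTop (𝓝 0) := by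
      have h2 := h1.smul_const (const 1)
      rw [zero_smul] at h2
      exact h2.congr fun k => (const_smul _).symm
    have he't : Tendsto e' atTop (𝓝 0) := by
      have := hct.add he0t
      rw [add_zero] at this
      exact this
    refine hNA ⟨l', e', r, fun k => hL k (N k), hr, ?_, he't, ?_⟩
    · intro k
      exact le_add_of_both _ _ (le_zero_const _ (by positivity)) (hE k (N k))
    · intro k
      have h0 := hler k (N k)
      have hm : le (const (c k)) (const (1 / (k + 1 : ℝ))) :=
        le_const_mono _ _ (hclt k).le
      have h2 := hadd _ _ (l' k) (hadd _ _ (e0 k) hm)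
      exact htrans _ _ _ h0 h2
  · -- superRep positive on R → no free lunch
    intro hpos hFL
    obtain ⟨l, e, r, hl, hr, he, het, hler⟩ := hFL
    have hle0 : superRep le I const r ≤ 0 := by
      have hmem : (0 : ℝ) ∈ {c : ℝ | ∃ l e : ℕ → H, (∀ n, l n ∈ I) ∧ (∀ n, le 0 (e n)) ∧
          Tendsto e atTop (𝓝 0) ∧ ∀ n, le r (const c + e n + l n)} := by
        refine ⟨l, e, hl, he, het, fun n => ?_⟩
        rw [const_zero, zero_add]
        exact hler n
      have h := sInf_le (Set.mem_image_of_mem (fun c : ℝ => (c : EReal)) hmem)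
      rw [superRep]
      exact h.trans_eq EReal.coe_zero
    exact absurd (hpos r hr) (not_lt.mpr hle0)
end

section
/- If a financial market (𝓗,τ,≤,𝓘,𝓡) is strongly free of arbitrage, then the effective domain dom(𝓓*) = {φ ∈ 𝓗′ : sup_{Y∈𝓗}(φ(Y) − 𝓓(Y)) < ∞} of the convex conjugate of the super-replication functional coincides with the set 𝓠_ac of absolutely continuous martingale functionals. -/
open Filter Topology MeasureTheory

/-- The convex conjugate `𝓓*` of an `EReal`-valued functional, on the topological dual `𝓗′`. -/
noncomputable def conjugate {H : Type*} [AddCommGroup H] [Module ℝ H] [TopologicalSpace H]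
    (D : H → EReal) (φ : H →L[ℝ] ℝ) : EReal :=
  ⨆ Y : H, (((φ Y : ℝ) : EReal) - D Y)

theorem conjugate_domain_eq_Qac
    {Ω : Type*} [MeasurableSpace Ω]
    -- the commodity space 𝓗: a vector space of measurable functions containing constants,
    -- with a metrizable vector space topology τ
    (H : Submodule ℝ (Ω → ℝ)) [TopologicalSpace H]
    [TopologicalSpace.MetrizableSpace H] [IsTopologicalAddGroup H] [ContinuousSMul ℝ H]
    (hmeas : ∀ X : H, Measurable (X : Ω → ℝ))
    (hconst : ∀ c : ℝ, (fun _ : Ω => c) ∈ H)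
    -- the common order ≤ : a preorder compatible with the vector operations,
    -- agreeing with the order of ℝ on constants and extending the pointwise order
    (le : H → H → Prop)
    (hrefl : ∀ X, le X X)
    (htrans : ∀ X Y Z, le X Y → le Y Z → le X Z)
    (hadd : ∀ X Y W : H, le X Y → le (X + W) (Y + W))
    (hsmul : ∀ (X Y : H) (c : ℝ), 0 ≤ c → le X Y → le (c • X) (c • Y))
    (hconst_iff : ∀ c d : ℝ,
      le ⟨fun _ => c, hconst c⟩ ⟨fun _ => d, hconst d⟩ ↔ c ≤ d)
    (hpointwise : ∀ X Y : H, (∀ ω, (X : Ω → ℝ) ω ≤ (Y : Ω → ℝ) ω) → le X Y)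
    -- the net trades 𝓘: a convex cone containing 0
    (I : Set H)
    (hI0 : (0 : H) ∈ I)
    (hIcone : ∀ x ∈ I, ∀ y ∈ I, ∀ a b : ℝ, 0 ≤ a → 0 ≤ b → a • x + b • y ∈ I)
    -- the relevant claims 𝓡: a convex subset of the positive claims 𝓟⁺
    (R : Set H)
    (hRpos : R ⊆ {X | le 0 X ∧ ¬ le X 0})
    (hRconv : Convex ℝ R)
    :
    StronglyFreeOfArbitrage le I R →
      {φ : H →L[ℝ] ℝ |
          conjugate (superRep le I (fun c => ⟨fun _ => c, hconst c⟩)) φ ≠ ⊤}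
        = Qac le I (⟨fun _ => 1, hconst 1⟩ : H) := by
  intro _hNFA
  classical
  set cst : ℝ → H := fun c => ⟨fun _ => c, hconst c⟩ with hcst
  set D := superRep le I cst with hDdef
  have hcst_smul : ∀ c : ℝ, cst c = c • cst 1 := by
    intro c
    apply Subtype.ext
    funext ω
    simp [hcst]
  have hDle : ∀ (Y : H) (c : ℝ) (l e : ℕ → H), (∀ n, l n ∈ I) → (∀ n, le 0 (e n)) →
      Filter.Tendsto e atTop (𝓝 0) → (∀ n, le Y (cst c + e n + l n)) → D Y ≤ (c : EReal) := by
    intro Y c l e h1 h2 h3 h4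
    exact sInf_le ⟨c, ⟨l, e, h1, h2, h3, h4⟩, rfl⟩
  have hz : ∀ Y : H, cst 0 + (0 : H) + Y = Y := by
    intro Y
    apply Subtype.ext
    funext ω
    simp [hcst]
  have hDconst : ∀ c : ℝ, D (cst c) ≤ (c : EReal) := by
    intro c
    refine hDle _ c (fun _ => 0) (fun _ => 0) (fun _ => hI0) (fun _ => hrefl 0)
      tendsto_const_nhds (fun n => ?_)
    have h : cst c + (0 : H) + (0 : H) = cst c := by
      apply Subtype.ext; funext ω; simp
    rw [h]
    exact hrefl _
  have hDI : ∀ l ∈ I, ∀ t : ℝ, 0 ≤ t → D (t • l) ≤ (0 : EReal) := by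
    intro l hl t ht
    have hmem : t • l ∈ I := by
      have := hIcone l hl l hl t 0 ht le_rfl
      simpa using this
    have := hDle (t • l) 0 (fun _ => t • l) (fun _ => 0) (fun _ => hmem) (fun _ => hrefl 0)
      tendsto_const_nhds (fun n => by rw [hz (t • l)]; exact hrefl _)
    simpa using this
  have hDpos : ∀ X : H, le 0 X → ∀ t : ℝ, 0 ≤ t → D (-(t • X)) ≤ (0 : EReal) := by
    intro X hX t ht
    have h1 : le 0 (t • X) := by
      have := hsmul 0 X t ht hX
      simpa using this
    have h2 : le (-(t • X)) 0 := by
      have := hadd 0 (t • X) (-(t • X)) h1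
      simpa using this
    have := hDle (-(t • X)) 0 (fun _ => 0) (fun _ => 0) (fun _ => hI0) (fun _ => hrefl 0)
      tendsto_const_nhds (fun n => by rw [hz (0 : H)]; exact h2)
    simpa using this
  ext φ
  simp only [Set.mem_setOf_eq, Qac, IsMartingaleFunctional]
  constructor
  · intro hne
    have hterm : ∀ Y : H, ((φ Y : ℝ) : EReal) - D Y ≤ conjugate D φ := fun Y =>
      le_iSup (fun Y => ((φ Y : ℝ) : EReal) - D Y) Y
    have hDbot : ∀ Y : H, D Y ≠ ⊥ := by
      intro Y h
      apply hne
      have h2 := hterm Y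
      rw [h, EReal.coe_sub_bot] at h2
      exact top_le_iff.mp h2
    have hD0 : D 0 ≤ (0 : EReal) := by
      have := hDpos 0 (hrefl 0) 1 zero_le_one
      simpa using this
    have hSbot : conjugate D φ ≠ ⊥ := by
      intro h
      have h0 := hterm 0
      have hDt : D 0 ≠ ⊤ := fun ht => by rw [ht] at hD0; exact absurd hD0 (by simp)
      rw [h, ← EReal.coe_toReal hDt (hDbot 0), ← EReal.coe_sub] at h0
      exact (EReal.coe_ne_bot _) (le_bot_iff.mp h0)
    set s := (conjugate D φ).toReal with hs
    have hSeq : conjugate D φ = (s : EReal) := (EReal.coe_toReal hne hSbot).symm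
    have key : ∀ (Y : H) (c : ℝ), D Y ≤ (c : EReal) → φ Y ≤ c + s := by
      intro Y c hc
      have hDt : D Y ≠ ⊤ := fun ht => by
        rw [ht] at hc; exact absurd hc (by simp)
      have hDY : D Y = (((D Y).toReal : ℝ) : EReal) := (EReal.coe_toReal hDt (hDbot Y)).symm
      have h1 := hterm Y
      rw [hSeq, hDY, ← EReal.coe_sub, EReal.coe_le_coe_iff] at h1
      rw [hDY, EReal.coe_le_coe_iff] at hc
      linarith
    have helper : ∀ x : ℝ, (∀ t : ℝ, 0 < t → t * x ≤ s) → x ≤ 0 := by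
      intro x hx
      by_contra hposx
      push_neg at hposx
      have ht : 0 < (max s 0 + 1) / x := by positivity
      have h2 := hx _ ht
      rw [div_mul_cancel₀ _ (ne_of_gt hposx)] at h2
      have h3 : s ≤ max s 0 := le_max_left _ _
      linarith
    have hposφ : ∀ X, le 0 X → 0 ≤ φ X := by
      intro X hX
      have h := helper (-(φ X)) ?_
      · linarith
      · intro t ht
        have h := key (-(t • X)) 0 (hDpos X hX t ht.le)
        rw [map_neg, φ.map_smul, smul_eq_mul] at h
        rw [mul_neg]
        linarith
    have hmart : ∀ l ∈ I, φ l ≤ 0 := by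
      intro l hl
      refine helper (φ l) (fun t ht => ?_)
      have h := key (t • l) 0 (hDI l hl t ht.le)
      rw [φ.map_smul, smul_eq_mul] at h
      linarith
    have hφc : ∀ c : ℝ, φ (cst c) = c * φ (cst 1) := by
      intro c
      rw [hcst_smul c, φ.map_smul, smul_eq_mul]
    have hub : ∀ c : ℝ, c * φ (cst 1) ≤ c + s := by
      intro c
      have h := key (cst c) c (hDconst c)
      rwa [hφc] at h
    have hone1 : φ (cst 1) = 1 := by
      have h1 : φ (cst 1) - 1 ≤ 0 := by
        refine helper _ (fun t ht => ?_)
        have h := hub t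
        rw [mul_sub, mul_one]
        linarith
      have h2 : 1 - φ (cst 1) ≤ 0 := by
        refine helper _ (fun t ht => ?_)
        have h := hub (-t)
        rw [neg_mul] at h
        rw [mul_sub, mul_one]
        linarith
      linarith
    refine ⟨⟨hposφ, hone1, hmart⟩, ?_⟩
    intro Z h1 h2
    have ha := hposφ Z h1
    have hb : le 0 (-Z) := by
      have := hadd Z 0 (-Z) h2
      simpa using this
    have hc := hposφ (-Z) hb
    rw [map_neg] at hc
    linarith
  · rintro ⟨⟨hpos, hone1, hmart⟩, hzero⟩
    have hone1' : φ (cst 1) = 1 := hone1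
    have hmono : ∀ A B : H, le A B → φ A ≤ φ B := by
      intro A B hAB
      have h0 : le 0 (B - A) := by
        have := hadd A B (-A) hAB
        simpa [sub_eq_add_neg] using this
      have h1 := hpos _ h0
      rw [map_sub] at h1
      linarith
    have hφc : ∀ c : ℝ, φ (cst c) = c := by
      intro c
      rw [hcst_smul c, φ.map_smul, smul_eq_mul, hone1', mul_one]
    have hsup : conjugate D φ ≤ 0 := by
      refine iSup_le fun Y => ?_
      have hYD : ((φ Y : ℝ) : EReal) ≤ D Y := by
        refine le_sInf ?_
        rintro b ⟨c, ⟨l, e, hl, he, hetend, hle⟩, rfl⟩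
        rw [EReal.coe_le_coe_iff]
        have hn : ∀ n, φ Y ≤ c + φ (e n) := by
          intro n
          have hm := hmono Y _ (hle n)
          rw [map_add, map_add, hφc] at hm
          have hln := hmart (l n) (hl n)
          linarith
        have htend : Filter.Tendsto (fun n => c + φ (e n)) atTop (𝓝 (c + 0)) := by
          refine tendsto_const_nhds.add ?_
          have := (φ.continuous.tendsto 0).comp hetend
          simpa [Function.comp_def] using this
        have := ge_of_tendsto' htend hn
        simpa using this
      rcases eq_or_ne (D Y) ⊤ with h | h
      · rw [h, EReal.sub_top]
        exact bot_le
      · have hb : D Y ≠ ⊥ := by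
          intro hb
          rw [hb, le_bot_iff] at hYD
          exact (EReal.coe_ne_bot _) hYD
        rw [← EReal.coe_toReal h hb] at hYD ⊢
        rw [← EReal.coe_sub]
        rw [EReal.coe_le_coe_iff] at hYD
        exact_mod_cast sub_nonpos.mpr hYD
    intro h
    rw [h] at hsup
    exact absurd hsup (by simp)
end

section
/- In the strong-EMH setting under risk, the financial market is viable if and only if the common prior ℙ is a martingale measure, i.e. E_ℙ[ℓ] = 0 for every net trade ℓ ∈ 𝓘. In this case ℙ is the unique martingale measure: any probability measure ℚ on (Ω,𝓕) inducing a continuous linear functional on L¹(ℙ), satisfying E_ℚ[X] = 0 whenever E_ℙ[X] = 0 and E_ℚ[ℓ] ≤ 0 for every ℓ ∈ 𝓘, equals ℙ. -/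
open Filter Topology MeasureTheory

/-- **Strong Efficient Market Hypothesis under risk.** With `𝓗 = L¹(Ω,𝓕,ℙ)`, common order
given by comparison of `ℙ`-expectations, relevant claims the payoffs with positive
`ℙ`-expectation, and net trades a linear subspace `𝓘`, the market is viable if and only if
the common prior `ℙ` is a martingale measure (`E_ℙ[ℓ] = 0` for all `ℓ ∈ 𝓘`); in this case
`ℙ` is the unique martingale measure. -/
theorem viable_iff_common_prior_is_martingale_measure
    {Ω : Type*} [MeasurableSpace Ω] (P : Measure Ω) [IsProbabilityMeasure P]
    (I : Submodule ℝ (Lp ℝ 1 P)) :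
    (Viable (fun X Y : Lp ℝ 1 P => ∫ ω, X ω ∂P ≤ ∫ ω, Y ω ∂P)
        (I : Set (Lp ℝ 1 P)) {X : Lp ℝ 1 P | 0 < ∫ ω, X ω ∂P} ↔
      ∀ l ∈ I, ∫ ω, (l : Lp ℝ 1 P) ω ∂P = 0) ∧
    (Viable (fun X Y : Lp ℝ 1 P => ∫ ω, X ω ∂P ≤ ∫ ω, Y ω ∂P)
        (I : Set (Lp ℝ 1 P)) {X : Lp ℝ 1 P | 0 < ∫ ω, X ω ∂P} →
      ∀ Q : Measure Ω, IsProbabilityMeasure Q →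
        -- `ℚ` induces a continuous linear functional on `L¹(ℙ)`
        (∃ C : ℝ, ∀ X : Ω → ℝ, Integrable X P →
          Integrable X Q ∧ |∫ ω, X ω ∂Q| ≤ C * ∫ ω, |X ω| ∂P) →
        -- `E_ℚ[X] = 0` whenever `E_ℙ[X] = 0`
        (∀ X : Ω → ℝ, Integrable X P → ∫ ω, X ω ∂P = 0 → ∫ ω, X ω ∂Q = 0) →
        -- `ℚ` is a martingale measure: `E_ℚ[ℓ] ≤ 0` for every net trade
        (∀ l ∈ I, ∫ ω, (l : Lp ℝ 1 P) ω ∂Q ≤ 0) →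
        Q = P) := by
  classical
  -- linearity helper
  have hadd : ∀ (a b : ℝ) (X Y : Lp ℝ 1 P),
      ∫ ω, (a • X + b • Y : Lp ℝ 1 P) ω ∂P = a * ∫ ω, X ω ∂P + b * ∫ ω, Y ω ∂P := by
    intro a b X Y
    have h1 : (a • X + b • Y : Lp ℝ 1 P) =ᵐ[P] fun ω => a * X ω + b * Y ω := by
      filter_upwards [Lp.coeFn_add (a • X) (b • Y), Lp.coeFn_smul a X, Lp.coeFn_smul b Y]
        with ω h1 h2 h3
      rw [h1, Pi.add_apply, h2, h3]
      simp
    rw [integral_congr_ae h1,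
      integral_add ((L1.integrable_coeFn X).const_mul a) ((L1.integrable_coeFn Y).const_mul b),
      integral_const_mul, integral_const_mul]
  have hneg : ∀ X : Lp ℝ 1 P, ∫ ω, (-X : Lp ℝ 1 P) ω ∂P = -∫ ω, X ω ∂P := by
    intro X
    have h : (-X : Lp ℝ 1 P) = (-1 : ℝ) • X + (0 : ℝ) • X := by module
    rw [h, hadd]; ring
  constructor
  · constructor
    · -- viability implies martingale measure
      rintro ⟨𝒜, _, hI, hR⟩ l hl
      by_contra h
      rcases lt_or_gt_of_ne h with hlt | hgt
      · have hmem : (0:ℝ) < ∫ ω, (-l : Lp ℝ 1 P) ω ∂P := by rw [hneg]; linarith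
        obtain ⟨pre, hpre, _, hn⟩ := hR (-l) hmem
        exact hn (hI pre hpre (-l) (neg_mem hl))
      · obtain ⟨pre, hpre, _, hn⟩ := hR l hgt
        exact hn (hI pre hpre l hl)
    · -- martingale measure implies viability
      intro hmart
      refine ⟨{fun X Y => ∫ ω, X ω ∂P ≤ ∫ ω, Y ω ∂P}, ?_, ?_, ?_⟩
      · rintro pre rfl
        refine ⟨fun X Y => le_total _ _, fun X Y Z => le_trans, fun X Y h => h, ?_, ?_⟩
        · intro X Z₁ h₁ Z₂ h₂ a b ha hb hab
          show ∫ ω, X ω ∂P ≤ ∫ ω, (a • Z₁ + b • Z₂ : Lp ℝ 1 P) ω ∂P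
          rw [hadd]
          have e : a * ∫ ω, X ω ∂P + b * ∫ ω, X ω ∂P = ∫ ω, X ω ∂P := by
            rw [← add_mul, hab, one_mul]
          have e1 : a * ∫ ω, X ω ∂P ≤ a * ∫ ω, Z₁ ω ∂P := mul_le_mul_of_nonneg_left h₁ ha
          have e2 : b * ∫ ω, X ω ∂P ≤ b * ∫ ω, Z₂ ω ∂P := mul_le_mul_of_nonneg_left h₂ hb
          linarith
        · intro Xn X Y hconv hle
          have : Tendsto (fun n => ∫ ω, Xn n ω ∂P) atTop (𝓝 (∫ ω, X ω ∂P)) :=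
            (continuous_integral.tendsto X).comp hconv
          exact le_of_tendsto' this hle
      · rintro pre rfl l hl
        show ∫ ω, (l : Lp ℝ 1 P) ω ∂P ≤ ∫ ω, (0 : Lp ℝ 1 P) ω ∂P
        rw [hmart l hl]
        simp [integral_congr_ae (Lp.coeFn_zero ℝ 1 P)]
      · intro r hr
        refine ⟨_, rfl, ?_, ?_⟩
        · show ∫ ω, (0 : Lp ℝ 1 P) ω ∂P ≤ ∫ ω, r ω ∂P
          have h0 : ∫ ω, (0 : Lp ℝ 1 P) ω ∂P = 0 := by
            simp [integral_congr_ae (Lp.coeFn_zero ℝ 1 P)]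
          rw [h0]; exact le_of_lt hr
        · show ¬ ∫ ω, r ω ∂P ≤ ∫ ω, (0 : Lp ℝ 1 P) ω ∂P
          have h0 : ∫ ω, (0 : Lp ℝ 1 P) ω ∂P = 0 := by
            simp [integral_congr_ae (Lp.coeFn_zero ℝ 1 P)]
          rw [h0]; exact not_le.mpr hr
  · -- uniqueness
    rintro _ Q hQprob ⟨C, hC⟩ hQ0 _
    refine Measure.ext fun s hs => ?_
    rw [← ENNReal.toReal_eq_toReal_iff' (measure_ne_top Q s) (measure_ne_top P s)]
    set f : Ω → ℝ := s.indicator fun _ => (1:ℝ) with hf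
    have hfP : Integrable f P := (integrable_const 1).indicator hs
    have hfQ : Integrable f Q := (hC f hfP).1
    have hPf : ∫ ω, f ω ∂P = (P s).toReal := by
      exact integral_indicator_one (μ := P) hs
    have hQf : ∫ ω, f ω ∂Q = (Q s).toReal := by
      exact integral_indicator_one (μ := Q) hs
    have hg : ∫ ω, (f ω - (P s).toReal) ∂Q = 0 := by
      refine hQ0 (fun ω => f ω - (P s).toReal) (hfP.sub (integrable_const _)) ?_
      rw [integral_sub hfP (integrable_const _), hPf, integral_const]
      simp
    rw [integral_sub hfQ (integrable_const _), hQf, integral_const] at hg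
    simp at hg
    linarith
end

section
/- In the finite discrete-time market setting, there exists an arbitrage if and only if there exists a one-step arbitrage: some t ∈ {1,…,T} and a bounded 𝓕_{t−1}-measurable function h : Ω → ℝ^d such that ℓ := h·(S_t − S_{t−1}) belongs to 𝓟⁺. -/
open Filter Topology MeasureTheory

section DiscreteMarket

variable {Ω : Type*} {d : ℕ}

/-- The preorder induced by a class `𝓩` of negligible claims:
`X ≤ Y` iff `X ≤ Y + Z` pointwise for some `Z ∈ 𝓩`. -/
def leZ (Z : Set (Ω → ℝ)) (X Y : Ω → ℝ) : Prop :=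
  ∃ z ∈ Z, ∀ ω, X ω ≤ Y ω + z ω

/-- The positive claims `𝓟⁺ = {X : 0 ≤ X ∧ ¬ X ≤ 0}` for the preorder induced by `𝓩`. -/
def PplusZ (Z : Set (Ω → ℝ)) : Set (Ω → ℝ) :=
  {X | leZ Z 0 X ∧ ¬ leZ Z X 0}

/-- The net trades of a finite discrete-time market: gains from trade
`Σ_{t=1}^T H_t·(S_t − S_{t−1})` for bounded `𝓕_{t−1}`-measurable integrands `H_t`. -/
def trades (F : ℕ → MeasurableSpace Ω) (S : ℕ → Ω → Fin d → ℝ) (T : ℕ) :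
    Set (Ω → ℝ) :=
  {l | ∃ Hs : ℕ → Ω → Fin d → ℝ,
    (∀ t, 1 ≤ t → t ≤ T →
      Measurable[F (t - 1)] (Hs t) ∧ ∃ C : ℝ, ∀ ω i, |Hs t ω i| ≤ C) ∧
    l = fun ω => ∑ t ∈ Finset.Icc 1 T, ∑ i, Hs t ω i * (S t ω i - S (t - 1) ω i)}

end DiscreteMarket

lemma one_step_forward {Ω : Type*} {d : ℕ}
    (F : ℕ → MeasurableSpace Ω)
    (hF_mono : ∀ s t, s ≤ t → F s ≤ F t)
    (S : ℕ → Ω → Fin d → ℝ)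
    (hS_adapted : ∀ t, Measurable[F t] (S t))
    (Z : Submodule ℝ (Ω → ℝ))
    (hZ_sup : ∀ z ∈ Z, ∀ w ∈ Z, z ⊔ w ∈ Z) :
    ∀ T : ℕ, (∃ l ∈ trades F S T, l ∈ PplusZ (Z : Set (Ω → ℝ))) →
      ∃ t, 1 ≤ t ∧ t ≤ T ∧
        ∃ h : Ω → Fin d → ℝ, Measurable[F (t - 1)] h ∧ (∃ C : ℝ, ∀ ω i, |h ω i| ≤ C) ∧
          (fun ω => ∑ i, h ω i * (S t ω i - S (t - 1) ω i)) ∈ PplusZ (Z : Set (Ω → ℝ)) := by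
  intro T
  induction T with
  | zero =>
    rintro ⟨l, ⟨Hs, -, hl⟩, -, hlneg⟩
    exact absurd ⟨0, Z.zero_mem, fun ω => by simp [hl]⟩ hlneg
  | succ T ih =>
    rintro ⟨l, ⟨Hs, hHs, hl⟩, hl0, hlneg⟩
    classical
    set G : Ω → ℝ :=
      fun ω => ∑ t ∈ Finset.Icc 1 T, ∑ i, Hs t ω i * (S t ω i - S (t - 1) ω i) with hGdef
    set L : Ω → ℝ := fun ω => ∑ i, Hs (T + 1) ω i * (S (T + 1) ω i - S T ω i) with hLdef
    have hsplit : ∀ ω, l ω = G ω + L ω := by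
      intro ω
      rw [hl]
      simp only
      rw [Finset.sum_Icc_succ_top (Nat.le_add_left 1 T)]
      simp [hGdef, hLdef]
    obtain ⟨hHsTmeas, C, hC⟩ := hHs (T + 1) (Nat.le_add_left 1 T) le_rfl
    obtain ⟨w, hw, hwle⟩ := hl0
    simp only [Pi.zero_apply, zero_add] at hwle  -- hwle : ∀ ω, 0 ≤ l ω + w ω ??
    by_cases hG_le : leZ (Z : Set (Ω → ℝ)) G 0
    · -- use h = Hs (T+1)
      obtain ⟨z, hz, hzle⟩ := hG_le
      refine ⟨T + 1, Nat.le_add_left 1 T, le_rfl, Hs (T + 1), hHsTmeas, ⟨C, hC⟩, ?_, ?_⟩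
      · exact ⟨w + z, Z.add_mem hw hz,
          fun ω => by
            have h1 := hwle ω
            have h2 := hzle ω
            have h3 := hsplit ω
            have h0 : (∑ i : Fin d, Hs (T + 1) ω i * (S (T + 1) ω i - S (T + 1 - 1) ω i))
                = L ω := rfl
            simp only [Pi.add_apply, Pi.zero_apply, zero_add] at *
            linarith⟩
      · rintro ⟨z', hz', hz'le⟩
        refine hlneg ⟨z + z', Z.add_mem hz hz', fun ω => ?_⟩
        have h1 := hzle ω
        have h2 := hz'le ω
        have h3 := hsplit ω
        have h0 : (∑ i : Fin d, Hs (T + 1) ω i * (S (T + 1) ω i - S (T + 1 - 1) ω i))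
            = L ω := rfl
        simp only [Pi.add_apply, Pi.zero_apply, zero_add] at *
        linarith
    · by_cases hG_ge : leZ (Z : Set (Ω → ℝ)) 0 G
      · -- G is an arbitrage at horizon T
        obtain ⟨t, h1, h2, rest⟩ := ih ⟨G,
          ⟨Hs, fun t ht1 ht2 => hHs t ht1 (ht2.trans (Nat.le_succ T)), rfl⟩, hG_ge, hG_le⟩
        exact ⟨t, h1, h2.trans (Nat.le_succ T), rest⟩
      · -- restrict to A = {G < 0}
        have hGmeas : Measurable[F T] G := by
          apply Finset.measurable_sum
          intro t ht
          obtain ⟨ht1, ht2⟩ := Finset.mem_Icc.mp ht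
          apply Finset.measurable_sum
          intro i _
          have h1 : Measurable[F T] (fun ω => Hs t ω i) :=
            ((measurable_pi_apply i).comp (hHs t ht1 (ht2.trans (Nat.le_succ T))).1).mono
              (hF_mono (t - 1) T (by omega)) le_rfl
          have h2 : Measurable[F T] (fun ω => S t ω i) :=
            ((measurable_pi_apply i).comp (hS_adapted t)).mono (hF_mono t T ht2) le_rfl
          have h3 : Measurable[F T] (fun ω => S (t - 1) ω i) :=
            ((measurable_pi_apply i).comp (hS_adapted (t - 1))).mono
              (hF_mono (t - 1) T (by omega)) le_rfl
          exact h1.mul (h2.sub h3)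
        set A : Set Ω := {ω | G ω < 0} with hAdef
        have hA : MeasurableSet[F T] A := measurableSet_lt hGmeas measurable_const
        set h : Ω → Fin d → ℝ := A.piecewise (Hs (T + 1)) 0 with hhdef
        have hval : ∀ ω, (∑ i, h ω i * (S (T + 1) ω i - S (T + 1 - 1) ω i))
            = if ω ∈ A then L ω else 0 := by
          intro ω
          by_cases hmem : ω ∈ A
          · simp only [if_pos hmem]
            exact Finset.sum_congr rfl fun i _ => by
              simp [hhdef, Set.piecewise, hmem, hLdef]
          · simp [hhdef, Set.piecewise, hmem]
        refine ⟨T + 1, Nat.le_add_left 1 T, le_rfl, h,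
          Measurable.piecewise hA hHsTmeas measurable_const,
          ⟨max C 0, fun ω i => by
            by_cases hmem : ω ∈ A
            · simp only [hhdef, Set.piecewise, hmem, if_pos]
              exact (hC ω i).trans (le_max_left _ _)
            · simp [hhdef, Set.piecewise, hmem]⟩, ?_, ?_⟩
        · -- 0 ≤ restricted claim
          refine ⟨w ⊔ 0, hZ_sup w hw 0 Z.zero_mem, fun ω => ?_⟩
          simp only [Pi.zero_apply, zero_add, Pi.sup_apply]
          rw [hval ω]
          by_cases hmem : ω ∈ A
          · have h1 := hwle ω
            have h3 := hsplit ω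
            have h4 : w ω ≤ w ω ⊔ 0 := le_sup_left
            have h5 : G ω < 0 := hmem
            simp only [if_pos hmem]
            linarith
          · simp only [if_neg hmem]
            have : (0 : ℝ) ≤ w ω ⊔ 0 := le_sup_right
            linarith
        · -- not ≤ 0
          rintro ⟨z, hz, hzle⟩
          refine hG_ge ⟨(z + w) ⊔ 0, hZ_sup _ (Z.add_mem hz hw) 0 Z.zero_mem, fun ω => ?_⟩
          simp only [Pi.zero_apply, zero_add, Pi.sup_apply, Pi.add_apply]
          by_cases hmem : ω ∈ A
          · have h1 := hzle ω
            simp only [Pi.zero_apply, zero_add] at h1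
            rw [hval ω, if_pos hmem] at h1
            have h2 := hwle ω
            have h3 := hsplit ω
            have h4 : z ω + w ω ≤ (z ω + w ω) ⊔ 0 := le_sup_left
            linarith
          · have h5 : (0 : ℝ) ≤ G ω := not_lt.mp hmem
            have h4 : (0 : ℝ) ≤ (z ω + w ω) ⊔ 0 := le_sup_right
            linarith

/-- **One-step arbitrage.** In a finite discrete-time market there exists an arbitrage if
and only if there exists a one-step arbitrage: some `t ∈ {1,…,T}` and a bounded
`𝓕_{t−1}`-measurable `h : Ω → ℝ^d` with `h·(S_t − S_{t−1}) ∈ 𝓟⁺`. -/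
theorem exists_arbitrage_iff_exists_one_step_arbitrage
    {Ω : Type*} {d T : ℕ} [MeasurableSpace Ω]
    -- the filtration
    (F : ℕ → MeasurableSpace Ω)
    (hF_mono : ∀ s t, s ≤ t → F s ≤ F t)
    (hF_le : ∀ t, F t ≤ (inferInstance : MeasurableSpace Ω))
    -- the adapted asset price process, with nonnegative coordinates
    (S : ℕ → Ω → Fin d → ℝ)
    (hS_adapted : ∀ t, Measurable[F t] (S t))
    (hS_nonneg : ∀ t ω i, 0 ≤ S t ω i)
    -- the negligible claims: a linear space of measurable functions, a lattice,
    -- closed under pointwise convergence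
    (Z : Submodule ℝ (Ω → ℝ))
    (hZ_meas : ∀ z ∈ Z, Measurable z)
    (hZ_sup : ∀ z ∈ Z, ∀ w ∈ Z, z ⊔ w ∈ Z)
    (hZ_inf : ∀ z ∈ Z, ∀ w ∈ Z, z ⊓ w ∈ Z)
    (hZ_closed : ∀ (zn : ℕ → Ω → ℝ) (z : Ω → ℝ), (∀ n, zn n ∈ Z) →
      (∀ ω, Tendsto (fun n => zn n ω) atTop (𝓝 (z ω))) → z ∈ Z) :
    (∃ l ∈ trades F S T, l ∈ PplusZ (Z : Set (Ω → ℝ))) ↔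
      ∃ t, 1 ≤ t ∧ t ≤ T ∧
        ∃ h : Ω → Fin d → ℝ, Measurable[F (t - 1)] h ∧ (∃ C : ℝ, ∀ ω i, |h ω i| ≤ C) ∧
          (fun ω => ∑ i, h ω i * (S t ω i - S (t - 1) ω i)) ∈ PplusZ (Z : Set (Ω → ℝ)) := by
  constructor
  · exact fun hl => one_step_forward F hF_mono S hS_adapted Z hZ_sup T hl
  · rintro ⟨t, ht1, htT, h, hmeas, hbdd, hP⟩
    classical
    refine ⟨fun ω => ∑ i, h ω i * (S t ω i - S (t - 1) ω i), ⟨fun s => if s = t then h else 0,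
      fun s hs1 hsT => ?_, ?_⟩, hP⟩
    · by_cases hst : s = t
      · subst hst; simpa using ⟨hmeas, hbdd⟩
      · simp only [if_neg hst]
        exact ⟨measurable_const, 0, by simp⟩
    · funext ω
      rw [Finset.sum_eq_single_of_mem t (Finset.mem_Icc.mpr ⟨ht1, htT⟩)]
      · simp
      · intro s _ hst
        simp [if_neg hst]
end
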